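/- Let C be a linear code in F_q^n and S ⊆ T ⊆ [n]. Then |C(S,T)| = |C| * Σ_{A ⊆ S} (-1)^{|A|} |C^⊥(T^c ∪ A)| / q^{n - |T| + |A|}. -/

import Mathlib

open Finset

variable {F : Type*} [Field F] [Fintype F] [DecidableEq F]

/-- Hamming weight of a vector. -/
def wt {n : ℕ} (x : Fin n → F) : ℕ := (Finset.univ.filter fun i => x i ≠ 0).card

/-- Support of a vector, as a finset. -/
def supp {n : ℕ} (x : Fin n → F) : Finset (Fin n) := Finset.univ.filter fun i => x i ≠ 0

/-- The dual code with respect to the standard bilinear form. -/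
def dualCode {ι : Type*} [Fintype ι] (C : Submodule F (ι → F)) : Submodule F (ι → F) where
  carrier := {x | ∀ y ∈ C, ∑ i, x i * y i = 0}
  add_mem' := by
    intro a b ha hb y hy
    simp only [Set.mem_setOf_eq] at *
    simp only [Pi.add_apply, add_mul, Finset.sum_add_distrib, ha y hy, hb y hy, add_zero]
  zero_mem' := by intro y hy; simp
  smul_mem' := by
    intro c a ha y hy
    simp only [Set.mem_setOf_eq] at *
    simp only [Pi.smul_apply, smul_eq_mul, mul_assoc, ← Finset.mul_sum, ha y hy, mul_zero]

/-- Refined weight enumerator `W_i^S(C)`. -/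
noncomputable def W {n : ℕ} (C : Submodule F (Fin n → F)) (i : ℕ) (S : Finset (Fin n)) : ℕ :=
  Set.ncard {x : Fin n → F | x ∈ C ∧ wt x = i ∧ S ⊆ supp x}

/-- Shortening of a code to a set of coordinates. -/
def shortening {ι : Type*} [Fintype ι] (C : Submodule F (ι → F)) (S : Finset ι) :
    Submodule F (ι → F) where
  carrier := {x | x ∈ C ∧ ∀ i, i ∉ S → x i = 0}
  add_mem' := by
    rintro a b ⟨ha, ha0⟩ ⟨hb, hb0⟩
    exact ⟨C.add_mem ha hb, fun i hi => by simp [ha0 i hi, hb0 i hi]⟩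
  zero_mem' := ⟨C.zero_mem, fun i _ => rfl⟩
  smul_mem' := by
    rintro c a ⟨ha, ha0⟩
    exact ⟨C.smul_mem c ha, fun i hi => by simp [ha0 i hi]⟩

/-- Projection (puncturing) onto the coordinates indexed by `S`. -/
def projMap {ι : Type*} [Fintype ι] (S : Finset ι) : (ι → F) →ₗ[F] ({ i // i ∈ S } → F) :=
  LinearMap.funLeft F F Subtype.val

/-- The `i`-th generalized Hamming weight of a code. -/
noncomputable def genWeight {n : ℕ} (C : Submodule F (Fin n → F)) (i : ℕ) : ℕ :=
  sInf {w | ∃ D : Submodule F (Fin n → F), D ≤ C ∧ Module.finrank F D = i ∧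
    Set.ncard {j : Fin n | ∃ x ∈ D, x j ≠ 0} = w}

/-- A code is nondegenerate if no coordinate vanishes identically. -/
def Nondegenerate {n : ℕ} (C : Submodule F (Fin n → F)) : Prop :=
  ∀ i : Fin n, ∃ x ∈ C, x i ≠ 0

/-- A code has locality `r`. -/
def HasLocality {n : ℕ} (C : Submodule F (Fin n → F)) (r : ℕ) : Prop :=
  ∀ i : Fin n, ∃ S : Finset (Fin n), i ∉ S ∧ S.card ≤ r ∧
    ∀ x ∈ C, ∀ y ∈ C, (∀ j ∈ S, x j = y j) → x i = y i

/-- A nondegenerate code has locality `(r, δ)`. -/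
def HasLocalityRD {n : ℕ} (C : Submodule F (Fin n → F)) (r δ : ℕ) : Prop :=
  (∀ i : Fin n, ∃ x ∈ C, x i ≠ 0) ∧
  ∀ i : Fin n, ∃ S : Finset (Fin n), i ∉ S ∧ S.card ≤ r + δ ∧
    ∀ x ∈ C, (∃ j ∈ insert i S, x j ≠ 0) →
      δ ≤ ((insert i S).filter fun j => x j ≠ 0).card
section Aux

variable {F : Type*} [Field F] [Fintype F] [DecidableEq F] {n : ℕ}

lemma supp_subset_iff {x : Fin n → F} {U : Finset (Fin n)} :
    supp x ⊆ U ↔ ∀ i ∉ U, x i = 0 := by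
  constructor
  · intro h i hi
    by_contra hx
    exact hi (h (by simp [supp, hx]))
  · intro h i hi
    simp only [supp, Finset.mem_filter, Finset.mem_univ, true_and] at hi
    by_contra hU
    exact hi (h i hU)

lemma mem_shortening_iff {C : Submodule F (Fin n → F)} {U : Finset (Fin n)}
    {x : Fin n → F} : x ∈ shortening C U ↔ x ∈ C ∧ supp x ⊆ U := by
  rw [supp_subset_iff]; rfl

/-- The standard dot product bilinear form. -/
def dotB (F : Type*) [Field F] (n : ℕ) : LinearMap.BilinForm F (Fin n → F) :=
  LinearMap.mk₂ F (fun x y => ∑ i, x i * y i)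
    (fun x y z => by simp [add_mul, Finset.sum_add_distrib])
    (fun c x y => by simp [Finset.mul_sum, mul_assoc])
    (fun x y z => by simp [mul_add, Finset.sum_add_distrib])
    (fun c x y => by simp [Finset.mul_sum, mul_left_comm])

@[simp] lemma dotB_apply (x y : Fin n → F) : dotB F n x y = ∑ i, x i * y i := rfl

lemma dotB_isRefl : (dotB F n).IsRefl := by
  intro x y h
  simpa [mul_comm] using h

lemma dotB_nondegenerate : (dotB F n).Nondegenerate := by
  constructor
  · intro x hx
    funext i
    have := hx (Pi.single i 1)
    simpa [Pi.single_apply, mul_ite, Finset.sum_ite_eq'] using this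
  · intro x hx
    funext i
    have := hx (Pi.single i 1)
    simpa [Pi.single_apply, ite_mul, Finset.sum_ite_eq, Finset.sum_ite_eq'] using this

lemma dualCode_eq_orthogonal (C : Submodule F (Fin n → F)) :
    dualCode C = (dotB F n).orthogonal C := by
  ext x
  rw [LinearMap.BilinForm.mem_orthogonal_iff]
  constructor
  · intro hx y hy
    have := hx y hy
    simpa [LinearMap.BilinForm.IsOrtho, mul_comm] using this
  · intro hx y hy
    have := hx y hy
    simpa [LinearMap.BilinForm.IsOrtho, mul_comm] using this

lemma finrank_add_finrank_dualCode (C : Submodule F (Fin n → F)) :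
    Module.finrank F C + Module.finrank F (dualCode C) = n := by
  rw [dualCode_eq_orthogonal]
  have h := LinearMap.BilinForm.finrank_orthogonal (B := dotB F n)
    dotB_nondegenerate C
  have hle : Module.finrank F C ≤ Module.finrank F (Fin n → F) := Submodule.finrank_le C
  have hV : Module.finrank F (Fin n → F) = n := by simp [Module.finrank_pi]
  rw [hV] at h hle
  omega

/-- The space of vectors supported in `U` is `shortening ⊤ U`; it has dimension `|U|`. -/
def shorteningTopEquiv (U : Finset (Fin n)) :
    (shortening (⊤ : Submodule F (Fin n → F)) U) ≃ₗ[F] ({ i // i ∈ U } → F) where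
  toFun x i := x.1 i
  invFun y := ⟨fun i => if h : i ∈ U then y ⟨i, h⟩ else 0,
    ⟨trivial, fun i hi => dif_neg hi⟩⟩
  left_inv := by
    rintro ⟨x, -, hx⟩
    ext i
    by_cases h : i ∈ U
    · simp [h]
    · simp [h, hx i h]
  right_inv := by
    intro y
    ext ⟨i, h⟩
    simp [h]
  map_add' x y := rfl
  map_smul' c x := rfl

lemma finrank_shortening_top (U : Finset (Fin n)) :
    Module.finrank F (shortening (⊤ : Submodule F (Fin n → F)) U) = U.card := by
  rw [(shorteningTopEquiv (F := F) U).finrank_eq, Module.finrank_pi]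
  simp

lemma shortening_eq_inf (C : Submodule F (Fin n → F)) (U : Finset (Fin n)) :
    shortening C U = C ⊓ shortening (⊤ : Submodule F (Fin n → F)) U := by
  ext x
  simp only [Submodule.mem_inf, mem_shortening_iff]
  tauto

lemma shortening_dual_eq (C : Submodule F (Fin n → F)) (U : Finset (Fin n)) :
    shortening (dualCode C) Uᶜ =
      dualCode (C ⊔ shortening (⊤ : Submodule F (Fin n → F)) U) := by
  ext x
  constructor
  · rintro ⟨hx, h0⟩ y hy
    rcases Submodule.mem_sup.1 hy with ⟨c, hc, e, he, rfl⟩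
    have hxe : ∑ i, x i * e i = 0 := by
      apply Finset.sum_eq_zero
      intro i _
      by_cases hiU : i ∈ U
      · rw [h0 i (by simp [hiU]), zero_mul]
      · rw [he.2 i hiU, mul_zero]
    simp only [Pi.add_apply, mul_add, Finset.sum_add_distrib, hx c hc, hxe, add_zero]
  · intro hx
    refine ⟨fun y hy => hx y (Submodule.mem_sup_left hy), fun i hi => ?_⟩
    have hiU : i ∈ U := by simpa using hi
    have hsingle : Pi.single i (1 : F) ∈
        (C ⊔ shortening (⊤ : Submodule F (Fin n → F)) U) := by
      refine Submodule.mem_sup_right ⟨trivial, fun j hj => ?_⟩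
      exact Pi.single_eq_of_ne (fun h => hj (by rw [h]; exact hiU)) 1
    have := hx _ hsingle
    simpa [Pi.single_apply, mul_ite, Finset.sum_ite_eq'] using this

lemma natCard_submodule (W : Submodule F (Fin n → F)) :
    Nat.card W = Fintype.card F ^ Module.finrank F W := by
  have : Fintype W := Fintype.ofFinite _
  rw [Nat.card_eq_fintype_card, Module.card_eq_pow_finrank (K := F)]

lemma ncard_shortening (C : Submodule F (Fin n → F)) (U : Finset (Fin n)) :
    Set.ncard {x : Fin n → F | x ∈ C ∧ supp x ⊆ U} =
      Fintype.card F ^ Module.finrank F (shortening C U) := by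
  have hs : {x : Fin n → F | x ∈ C ∧ supp x ⊆ U} = (shortening C U : Set (Fin n → F)) := by
    ext x
    simp only [Set.mem_setOf_eq, SetLike.mem_coe]
    exact mem_shortening_iff.symm
  rw [hs, ← Nat.card_coe_set_eq]
  simp only [SetLike.coe_sort_coe]
  exact natCard_submodule _

/-- The key duality identity. -/
lemma key_duality (C : Submodule F (Fin n → F)) (U : Finset (Fin n)) :
    (Set.ncard {x : Fin n → F | x ∈ C ∧ supp x ⊆ U} : ℝ) *
        (Fintype.card F : ℝ) ^ (n - U.card) =
      (Set.ncard (C : Set (Fin n → F)) : ℝ) *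
        (Set.ncard {x : Fin n → F | x ∈ dualCode C ∧ supp x ⊆ Uᶜ} : ℝ) := by
  have h1 : Module.finrank F (C ⊔ shortening (⊤ : Submodule F (Fin n → F)) U : Submodule F (Fin n → F))
      + Module.finrank F (shortening C U) = Module.finrank F C + U.card := by
    rw [shortening_eq_inf C U, ← finrank_shortening_top (F := F) U]
    exact Submodule.finrank_sup_add_finrank_inf_eq C (shortening ⊤ U)
  have h2 : Module.finrank F (C ⊔ shortening (⊤ : Submodule F (Fin n → F)) U : Submodule F (Fin n → F))
      + Module.finrank F (shortening (dualCode C) Uᶜ) = n := by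
    rw [shortening_dual_eq]
    exact finrank_add_finrank_dualCode _
  have hU : U.card ≤ n := by simpa using Finset.card_le_card (Finset.subset_univ U)
  have hC : Module.finrank F C ≤ n := by
    simpa [Module.finrank_pi] using Submodule.finrank_le C
  have hCoe : Set.ncard (C : Set (Fin n → F)) = Fintype.card F ^ Module.finrank F C := by
    rw [← Nat.card_coe_set_eq]
    simp only [SetLike.coe_sort_coe]
    exact natCard_submodule _
  rw [ncard_shortening, ncard_shortening, hCoe]
  push_cast
  rw [← pow_add, ← pow_add]
  congr 1
  omega

lemma ncard_filter (P : (Fin n → F) → Prop) [DecidablePred P] :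
    Set.ncard {x : Fin n → F | P x} = (Finset.univ.filter P).card := by
  rw [← Set.ncard_coe_finset]
  congr 1
  ext x
  simp

end Aux

section IE

variable {F : Type*} [Field F] [Fintype F] [DecidableEq F] {n : ℕ}

open Classical in
lemma inclusion_exclusion_step (C : Submodule F (Fin n → F)) (S T : Finset (Fin n)) :
    (Set.ncard {x : Fin n → F | x ∈ C ∧ S ⊆ supp x ∧ supp x ⊆ T} : ℝ) =
      ∑ A ∈ S.powerset, (-1 : ℝ) ^ A.card *
        (Set.ncard {x : Fin n → F | x ∈ C ∧ supp x ⊆ T \ A} : ℝ) := by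
  simp only [ncard_filter, Finset.card_filter]
  push_cast
  simp only [Finset.mul_sum, mul_ite, mul_one, mul_zero]
  rw [Finset.sum_comm]
  refine Finset.sum_congr rfl fun x _ => ?_
  by_cases hC : x ∈ C
  · by_cases hT : supp x ⊆ T
    · have hrw : ∀ A ∈ S.powerset,
          (if x ∈ C ∧ supp x ⊆ T \ A then (-1 : ℝ) ^ A.card else 0) =
            (if A ⊆ S \ supp x then (-1 : ℝ) ^ A.card else 0) := by
        intro A hA
        have hAS : A ⊆ S := Finset.mem_powerset.1 hA
        congr 1
        simp only [eq_iff_iff]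
        constructor
        · rintro ⟨-, h⟩ i hi
          refine Finset.mem_sdiff.2 ⟨hAS hi, fun hs => ?_⟩
          exact (Finset.mem_sdiff.1 (h hs)).2 hi
        · intro h
          refine ⟨hC, fun i hi => Finset.mem_sdiff.2 ⟨hT hi, fun hiA => ?_⟩⟩
          exact (Finset.mem_sdiff.1 (h hiA)).2 hi
      rw [Finset.sum_congr rfl hrw, ← Finset.sum_filter]
      have hfil : S.powerset.filter (· ⊆ S \ supp x) = (S \ supp x).powerset := by
        ext A
        simp only [Finset.mem_filter, Finset.mem_powerset]
        constructor
        · exact fun h => h.2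
        · exact fun h => ⟨h.trans (Finset.sdiff_subset), h⟩
      rw [hfil]
      have := Finset.sum_powerset_neg_one_pow_card (x := S \ supp x)
      have hcast : (∑ m ∈ (S \ supp x).powerset, (-1 : ℝ) ^ m.card) =
          ((∑ m ∈ (S \ supp x).powerset, (-1 : ℤ) ^ m.card : ℤ) : ℝ) := by
        push_cast; rfl
      rw [hcast, this]
      by_cases hS : S ⊆ supp x
      · simp [hC, hS, hT, Finset.sdiff_eq_empty_iff_subset.2 hS]
      · have : S \ supp x ≠ ∅ := fun h => hS (Finset.sdiff_eq_empty_iff_subset.1 h)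
        simp [hC, hS, this]
    · have hall : ∀ A : Finset (Fin n), ¬ (supp x ⊆ T \ A) :=
        fun A h => hT (h.trans Finset.sdiff_subset)
      simp [hT, hall]
  · simp [hC]

end IE

/-- For `S ⊆ T ⊆ [n]`,
`|C(S,T)| = |C| * Σ_{A ⊆ S} (-1)^{|A|} |C^⊥(T^c ∪ A)| / q^{n-|T|+|A|}`. -/
theorem stmt1 {n : ℕ} (C : Submodule F (Fin n → F)) (S T : Finset (Fin n)) (hST : S ⊆ T) :
    (Set.ncard {x : Fin n → F | x ∈ C ∧ S ⊆ supp x ∧ supp x ⊆ T} : ℝ) =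
      (Set.ncard (C : Set (Fin n → F)) : ℝ) *
        ∑ A ∈ S.powerset, (-1 : ℝ) ^ A.card *
          (Set.ncard {x : Fin n → F | x ∈ dualCode C ∧ supp x ⊆ Tᶜ ∪ A} : ℝ) /
            (Fintype.card F : ℝ) ^ (n - T.card + A.card) := by
  classical
  rw [inclusion_exclusion_step C S T, Finset.mul_sum]
  refine Finset.sum_congr rfl fun A hA => ?_
  have hAS : A ⊆ S := Finset.mem_powerset.1 hA
  have hAT : A ⊆ T := hAS.trans hST
  have hcompl : (T \ A)ᶜ = Tᶜ ∪ A := by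
    ext i
    simp only [Finset.mem_compl, Finset.mem_sdiff, Finset.mem_union, not_and, not_not]
    by_cases h : i ∈ A <;> by_cases h' : i ∈ T <;> simp [h, h']
  have hcard : (T \ A).card = T.card - A.card := Finset.card_sdiff_of_subset hAT
  have hTn : T.card ≤ n := by simpa using Finset.card_le_card (Finset.subset_univ T)
  have hAcard : A.card ≤ T.card := Finset.card_le_card hAT
  have hexp : n - (T \ A).card = n - T.card + A.card := by omega
  have hkey := key_duality C (T \ A)
  rw [hcompl, hexp] at hkey
  have he : ((Fintype.card F : ℝ) ^ (n - T.card + A.card)) ≠ 0 := by positivity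
  field_simp
  linear_combination hkey
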